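/- Let M > 0, Q, J be real numbers with d := M^2 - Q^2 - J^2/M^2 ≥ 0, and define A := 4π(2M^2 - Q^2 + 2M√d). Then A ≥ 4π√(Q^4 + 4J^2). -/

import Mathlib

open Real

theorem kerr_newman_area_ge (M Q J d A : ℝ) (hM : 0 < M)
    (hd : d = M ^ 2 - Q ^ 2 - J ^ 2 / M ^ 2) (hd0 : 0 ≤ d)
    (hA : A = 4 * π * (2 * M ^ 2 - Q ^ 2 + 2 * M * Real.sqrt d)) :
    A ≥ 4 * π * Real.sqrt (Q ^ 4 + 4 * J ^ 2) := by
  have hM2 : (0:ℝ) < M ^ 2 := by positivity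
  have hMd : M ^ 2 * d = M ^ 4 - M ^ 2 * Q ^ 2 - J ^ 2 := by
    rw [hd]; field_simp
  have hQ : Q ^ 2 ≤ M ^ 2 := by
    have hJ : 0 ≤ J ^ 2 / M ^ 2 := by positivity
    nlinarith [hd0, hd]
  have hsq : Q ^ 4 + 4 * J ^ 2 ≤ (2 * M ^ 2 - Q ^ 2) ^ 2 := by
    nlinarith [mul_nonneg hM2.le hd0, hMd]
  have key : Real.sqrt (Q ^ 4 + 4 * J ^ 2) ≤ 2 * M ^ 2 - Q ^ 2 := by
    calc Real.sqrt (Q ^ 4 + 4 * J ^ 2) ≤ Real.sqrt ((2 * M ^ 2 - Q ^ 2) ^ 2) :=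
          Real.sqrt_le_sqrt hsq
      _ = 2 * M ^ 2 - Q ^ 2 := Real.sqrt_sq (by nlinarith)
  have hs : 0 ≤ Real.sqrt d := Real.sqrt_nonneg d
  have hpi : (0:ℝ) < π := Real.pi_pos
  rw [hA]
  nlinarith [mul_le_mul_of_nonneg_left key (by positivity : (0:ℝ) ≤ 4 * π),
    mul_nonneg (mul_nonneg (by positivity : (0:ℝ) ≤ 8 * π) hM.le) hs]
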